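/- Fix integers n, m ≥ 1 and set d = n+m+1. Then Λ(n,m) is an admissible d-colored multigraph: its underlying multigraph is loopless and connected, and for each color k ∈ {1,…,d} the edges of color k form a perfect matching of the vertex set (every vertex is incident to exactly one edge of color k). -/

import Mathlib

noncomputable section
attribute [local instance] Classical.propDecidable

/-- A finite multigraph with colored edges, given by a finite vertex set `Vs` inside an
ambient type `V` and a finite set of edges; an edge is a triple `(u, v, i)` recording its
two endpoints (in an arbitrary chosen orientation) and its color `i`.  Since every vertex
of an admissible colored multigraph is incident to at most one edge of each color, this
faithfully represents the multigraphs occurring in crystallization theory. -/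
structure MG (V : Type) where
  Vs : Finset V
  Es : Finset (V × V × ℕ)

namespace MG

variable {V : Type}

/-- The edge `e` joins the vertices `u` and `v`, i.e. `φ(e) = {u, v}`. -/
def joins (e : V × V × ℕ) (u v : V) : Prop :=
  (e.1 = u ∧ e.2.1 = v) ∨ (e.1 = v ∧ e.2.1 = u)

/-- The vertex `v` is an endpoint of the edge `e`. -/
def incid (e : V × V × ℕ) (v : V) : Prop := e.1 = v ∨ e.2.1 = v

/-- Adjacency in the spanning subgraph `G_S` of edges whose color lies in `S`. -/
def Adj (G : MG V) (S : Finset ℕ) (u v : V) : Prop :=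
  u ∈ G.Vs ∧ v ∈ G.Vs ∧ ∃ e ∈ G.Es, e.2.2 ∈ S ∧ joins e u v

/-- `G.Conn S u v`: `u` and `v` are connected by a path of edges of `G_S`.
Two vertices are *disconnected* on `G_S` if `¬ G.Conn S u v`. -/
def Conn (G : MG V) (S : Finset ℕ) : V → V → Prop :=
  Relation.ReflTransGen (G.Adj S)

/-- Well-formedness of a multigraph with colors in `K`: endpoints of edges are vertices,
there are no loops, and all colors lie in `K`. -/
def WF (K : Finset ℕ) (G : MG V) : Prop :=
  ∀ e ∈ G.Es, e.1 ∈ G.Vs ∧ e.2.1 ∈ G.Vs ∧ e.1 ≠ e.2.1 ∧ e.2.2 ∈ K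

/-- Admissibility of a `K`-colored multigraph: it is (loopless and) connected, and for
each color `i ∈ K` the edges of color `i` form a perfect matching of the vertex set. -/
def Admissible (K : Finset ℕ) (G : MG V) : Prop :=
  WF K G ∧ (∀ u ∈ G.Vs, ∀ v ∈ G.Vs, G.Conn K u v) ∧
    (∀ i ∈ K, ∀ v ∈ G.Vs, ∃! e, e ∈ G.Es ∧ e.2.2 = i ∧ incid e v)

/-- The connected component of `G_S` containing the vertex `v`. -/
def comp (G : MG V) (S : Finset ℕ) (v : V) : Set V := {w | G.Conn S v w}

/-- The poset `P_Λ` associated to a `K`-colored multigraph: its elements are pairs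
`(H, S)` of a subset `S ⊆ K` and a connected component `H` of `G_S`. -/
def PElem (K : Finset ℕ) (G : MG V) : Type :=
  {p : Set V × Finset ℕ // p.2 ⊆ K ∧ ∃ v ∈ G.Vs, p.1 = G.comp p.2 v}

/-- The order of `P_Λ`: `(H, S) ≤ (H', S')` iff `S' ⊆ S` and `H' ⊆ H`
(so that `(G, K)` is the least element). -/
instance (K : Finset ℕ) (G : MG V) : PartialOrder (PElem K G) where
  le p q := q.1.2 ⊆ p.1.2 ∧ q.1.1 ⊆ p.1.1
  le_refl p := ⟨subset_rfl, subset_rfl⟩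
  le_trans p q r h₁ h₂ := ⟨h₂.1.trans h₁.1, h₂.2.trans h₁.2⟩
  le_antisymm p q h₁ h₂ :=
    Subtype.ext (Prod.ext (subset_antisymm h₂.2 h₁.2) (subset_antisymm h₂.1 h₁.1))

/-- The subgraph of `G` with vertex set `H` and the edges of `G_S` joining vertices
of `H`, viewed as an `S`-colored multigraph. -/
def restrict (G : MG V) (S : Finset ℕ) (H : Set V) : MG V where
  Vs := G.Vs.filter (· ∈ H)
  Es := G.Es.filter fun e => e.2.2 ∈ S ∧ e.1 ∈ H ∧ e.2.1 ∈ H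

/-- The cancelling `del_{x,y} Λ` of the pair of vertices `x, y` in a `K`-colored
multigraph: delete `x`, `y` and all edges incident to them, and for every color
`i ∈ K` not realized on an edge joining `x` and `y`, add a new edge of color `i`
joining the color-`i` neighbour of `x` to the color-`i` neighbour of `y`. -/
def del (K : Finset ℕ) (G : MG V) (x y : V) : MG V :=
  { Vs := G.Vs \ {x, y}
    Es := (G.Es.filter fun e => ¬ incid e x ∧ ¬ incid e y) ∪
      ((G.Vs ×ˢ G.Vs ×ˢ
          (K \ (K.filter fun i => ∃ e ∈ G.Es, e.2.2 = i ∧ joins e x y))).filter fun q =>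
        q.1 ≠ x ∧ q.1 ≠ y ∧ q.2.1 ≠ x ∧ q.2.1 ≠ y ∧
        (∃ e ∈ G.Es, e.2.2 = q.2.2 ∧ joins e x q.1) ∧
        (∃ e ∈ G.Es, e.2.2 = q.2.2 ∧ joins e y q.2.1)) }

end MG

/-- The four symbols `A`, `B`, `C`, `D` labelling the vertices of the colored graph
`Λ(n,m)`: a vertex of `Λ(n,m)` is a pair `(X, S)` (written `X(S)` in the paper) of a
symbol `X ∈ {A,B,C,D}` and an `n`-element subset `S ⊆ {1,…,n+m}`. -/
inductive Lbl | A | B | C | D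
deriving DecidableEq

/-- The `n`-element subsets of `{1,…,n+m}`. -/
def nsubs (n m : ℕ) : Finset (Finset ℕ) :=
  (Finset.Icc 1 (n+m)).powerset.filter fun S => S.card = n

/-- The vertex set of `Λ(n,m)`: all pairs `X(S)` with `X ∈ {A,B,C,D}` and `S` an
`n`-element subset of `{1,…,n+m}`. -/
def VsNM (n m : ℕ) : Finset (Lbl × Finset ℕ) :=
  ({Lbl.A, Lbl.B, Lbl.C, Lbl.D} : Finset Lbl) ×ˢ nsubs n m

/-- The set `{k-1, k}`, interpreted as `{1}` when `k = 1` and as `{N}` when `k = N+1`. -/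
def pairset (N k : ℕ) : Finset ℕ :=
  if k = 1 then {1} else if k = N + 1 then {N} else {k - 1, k}

/-- The description of the edges of `Λ(n,m)`: an edge of color `k` joins
(E1) `A(S)` and `B(S)` (or `C(S)` and `D(S)`) when `{k-1,k} ∩ S = ∅`;
(E2) `A(S)` and `C(S)` (or `B(S)` and `D(S)`) when `{k-1,k} ⊆ S`;
(E3) `X(S)` and `X((S \ {k}) ∪ {k-1})` when `2 ≤ k ≤ n+m`, `k ∈ S`, `k-1 ∉ S`. -/
def EdgeSpec (n m : ℕ) (q : (Lbl × Finset ℕ) × (Lbl × Finset ℕ) × ℕ) : Prop :=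
  ((q.1.2 = q.2.1.2 ∧ pairset (n+m) q.2.2 ∩ q.1.2 = ∅ ∧
      ((q.1.1 = Lbl.A ∧ q.2.1.1 = Lbl.B) ∨ (q.1.1 = Lbl.C ∧ q.2.1.1 = Lbl.D))) ∨
   (q.1.2 = q.2.1.2 ∧ pairset (n+m) q.2.2 ⊆ q.1.2 ∧
      ((q.1.1 = Lbl.A ∧ q.2.1.1 = Lbl.C) ∨ (q.1.1 = Lbl.B ∧ q.2.1.1 = Lbl.D))) ∨
   (q.1.1 = q.2.1.1 ∧ 2 ≤ q.2.2 ∧ q.2.2 ≤ n+m ∧ q.2.2 ∈ q.1.2 ∧ q.2.2 - 1 ∉ q.1.2 ∧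
      q.2.1.2 = insert (q.2.2 - 1) (q.1.2.erase q.2.2)))

/-- The `(n+m+1)`-colored multigraph `Λ(n,m)` (with colors `{1,…,n+m+1}`). -/
def LamNM (n m : ℕ) : MG (Lbl × Finset ℕ) where
  Vs := VsNM n m
  Es := (VsNM n m ×ˢ VsNM n m ×ˢ Finset.Icc 1 (n+m+1)).filter (EdgeSpec n m)

/-- `S ∈ X_j`, i.e. `S ⊆ {j+1,…,n+m}` and `#S = n+1-j`, for `1 ≤ j ≤ n`. -/
def inXj (n m j : ℕ) (S : Finset ℕ) : Prop :=
  1 ≤ j ∧ j ≤ n ∧ S ⊆ Finset.Icc (j+1) (n+m) ∧ S.card = n + 1 - j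

/-- `S ∈ X = X_1 ∪ ⋯ ∪ X_n`. -/
def inX (n m : ℕ) (S : Finset ℕ) : Prop := ∃ j, inXj n m j S

/-- `X` as a finite set of finsets. -/
def Xset (n m : ℕ) : Finset (Finset ℕ) :=
  (Finset.Icc 1 (n+m)).powerset.filter (inX n m)

/-- For `S = {i_1 < ⋯ < i_{n+1-j}} ∈ X_j` (where `j = n+1-#S`) and `S' = S \ {i_1}`,
the pair `D(S) = D_j(S)` of vertices of `Λ(n,m)`:
`{A([j-1] ∪ S), A([j] ∪ S')}` if `j` is odd and `i_1 = j+1`;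
`{A([j-1] ∪ S), B([i_1-j-1, i_1-2] ∪ S')}` if `j` is odd and `i_1 > j+1`;
`{B([i_1-j, i_1-2] ∪ S), B([i_1-j, i_1-1] ∪ S')}` if `j` is even. -/
def DS (n m : ℕ) (S : Finset ℕ) : (Lbl × Finset ℕ) × (Lbl × Finset ℕ) :=
  let j := n + 1 - S.card
  let i1 := if h : S.Nonempty then S.min' h else 0
  let S' := S.erase i1
  if Odd j then
    if i1 = j + 1 then
      ((Lbl.A, Finset.Icc 1 (j-1) ∪ S), (Lbl.A, Finset.Icc 1 j ∪ S'))
    else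
      ((Lbl.A, Finset.Icc 1 (j-1) ∪ S), (Lbl.B, Finset.Icc (i1-j-1) (i1-2) ∪ S'))
  else
    ((Lbl.B, Finset.Icc (i1-j) (i1-2) ∪ S), (Lbl.B, Finset.Icc (i1-j) (i1-1) ∪ S'))

/-- The binary encoding `∑_{i ∈ S} 2^i` of a finite set of naturals. -/
def binval (S : Finset ℕ) : ℕ := ∑ i ∈ S, 2 ^ i

/-- A numerical key linearizing the total order `≻` on `X`: for `S, T ∈ X`,
`D(T) ≻ D(S)` (i.e. `D(T)` comes earlier) if and only if `key T < key S`.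
(The primary comparison is by `j = n+1-#S` ascending; for equal `j`, `T >_rlex S`
holds exactly when the binary encoding of `T` is smaller than that of `S`.) -/
def key (n m : ℕ) (S : Finset ℕ) : ℕ :=
  (n + 1 - S.card) * 2 ^ (n + m + 2) + binval S

/-- `SX n m k` is the set `S ∈ X` whose pair `D(S)` is the `k`-th element `D_k` in the
total order `D_1 ≻ D_2 ≻ ⋯` (obtained by sorting the keys and decoding the `k`-th one). -/
def SX (n m k : ℕ) : Finset ℕ :=
  let kk := (((Xset n m).image (key n m)).sort (· ≤ ·)).getD (k-1) 0
  (Finset.Icc 1 (n+m)).filter fun i => Nat.testBit (kk % 2 ^ (n + m + 2)) i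

/-- The sequence of multigraphs `Λ^(1), Λ^(2), …` : `Lam0 n m (k-1) = Λ^(k)`, where
`Λ^(1) = Λ(n,m)` and `Λ^(k+1) = del_{D_k} Λ^(k)`. -/
def Lam0 (n m : ℕ) : ℕ → MG (Lbl × Finset ℕ)
  | 0 => LamNM n m
  | k + 1 => MG.del (Finset.Icc 1 (n+m+1)) (Lam0 n m k)
      (DS n m (SX n m (k+1))).1 (DS n m (SX n m (k+1))).2

/-- The number of elements `T ∈ X` with `D(T) ≻ D(S)`, i.e. cancelled before `D(S)`;
if `D(S) = D_k` then `posIdx n m S = k - 1`. -/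
def posIdx (n m : ℕ) (S : Finset ℕ) : ℕ :=
  ((Xset n m).filter fun T => key n m T < key n m S).card

/-- `Λ(S) = Λ^(k)` where `D_k = D(S)`: the multigraph to which the cancelling of the
pair `D(S)` is applied. -/
def LamS (n m : ℕ) (S : Finset ℕ) : MG (Lbl × Finset ℕ) := Lam0 n m (posIdx n m S)

/-- `Λ'(S) = Λ^(k+1) = del_{D(S)} Λ(S)` where `D_k = D(S)`. -/
def LamS' (n m : ℕ) (S : Finset ℕ) : MG (Lbl × Finset ℕ) := Lam0 n m (posIdx n m S + 1)

/-- Two vertices `u`, `v` are directly connected on `G` by the colors `H` if for every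
`i ∈ H` there is an edge of `G` of color `i` whose vertex set is `{u, v}`. -/
def dirConn {V : Type} (G : MG V) (u v : V) (H : Finset ℕ) : Prop :=
  ∀ i ∈ H, ∃ e ∈ G.Es, e.2.2 = i ∧ MG.joins e u v

/-- `color(S) = {l ∈ S : l-1 ∉ S}`. -/
def colorOf (S : Finset ℕ) : Finset ℕ := S.filter fun l => l - 1 ∉ S


namespace Stmt19
open Finset

lemma mem_nsubs {n m : ℕ} {S : Finset ℕ} :
    S ∈ nsubs n m ↔ S ⊆ Finset.Icc 1 (n+m) ∧ S.card = n := by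
  simp [nsubs]

lemma mem_VsNM {n m : ℕ} {v : Lbl × Finset ℕ} :
    v ∈ VsNM n m ↔ v.2 ∈ nsubs n m := by
  obtain ⟨X, S⟩ := v
  simp only [VsNM, Finset.mem_product]
  constructor
  · rintro ⟨-, h⟩; exact h
  · intro h; refine ⟨?_, h⟩; cases X <;> simp

lemma mem_Es {n m : ℕ} {e : (Lbl × Finset ℕ) × (Lbl × Finset ℕ) × ℕ} :
    e ∈ (LamNM n m).Es ↔
      e.1 ∈ VsNM n m ∧ e.2.1 ∈ VsNM n m ∧ e.2.2 ∈ Finset.Icc 1 (n+m+1) ∧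
        EdgeSpec n m e := by
  simp only [LamNM, Finset.mem_filter, Finset.mem_product]
  tauto

lemma pairset_one (N : ℕ) : pairset N 1 = {1} := by simp [pairset]

lemma pairset_top {N : ℕ} (hN : 1 ≤ N) : pairset N (N+1) = {N} := by
  rw [pairset, if_neg (by omega), if_pos rfl]

lemma pairset_mid {N k : ℕ} (h2 : 2 ≤ k) (hk : k ≤ N) : pairset N k = {k-1, k} := by
  rw [pairset, if_neg (by omega), if_neg (by omega)]

lemma pairset_nonempty (N k : ℕ) : (pairset N k).Nonempty := by
  unfold pairset; split_ifs <;> simp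

lemma pair_inter_empty {a b : ℕ} {S : Finset ℕ} :
    ({a, b} : Finset ℕ) ∩ S = ∅ ↔ a ∉ S ∧ b ∉ S := by
  rw [← Finset.disjoint_iff_inter_eq_empty, Finset.disjoint_left]
  constructor
  · intro h; exact ⟨h (by simp), h (by simp)⟩
  · rintro ⟨ha, hb⟩ x hx
    simp only [Finset.mem_insert, Finset.mem_singleton] at hx
    rcases hx with rfl | rfl <;> assumption

lemma pair_subset {a b : ℕ} {S : Finset ℕ} :
    ({a, b} : Finset ℕ) ⊆ S ↔ a ∈ S ∧ b ∈ S := by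
  simp [Finset.insert_subset_iff]

lemma singleton_inter_empty {a : ℕ} {S : Finset ℕ} :
    ({a} : Finset ℕ) ∩ S = ∅ ↔ a ∉ S := by
  rw [← Finset.disjoint_iff_inter_eq_empty, Finset.disjoint_left]
  constructor
  · intro h; exact h (by simp)
  · rintro ha x hx
    simp only [Finset.mem_singleton] at hx; subst hx; exact ha

lemma pairset_cases {N k : ℕ} (hN : 1 ≤ N) (h1 : 1 ≤ k) (h2 : k ≤ N+1) (S : Finset ℕ)
    (hne : ¬ pairset N k ∩ S = ∅) (hns : ¬ pairset N k ⊆ S) :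
    2 ≤ k ∧ k ≤ N ∧ ((k ∈ S ∧ k-1 ∉ S) ∨ (k ∉ S ∧ k-1 ∈ S)) := by
  by_cases hk1 : k = 1
  · subst hk1
    rw [pairset_one] at hne hns
    by_cases h : 1 ∈ S
    · exact absurd (Finset.singleton_subset_iff.mpr h) hns
    · exact absurd (singleton_inter_empty.mpr h) hne
  by_cases hkt : k = N+1
  · subst hkt
    rw [pairset_top hN] at hne hns
    by_cases h : N ∈ S
    · exact absurd (Finset.singleton_subset_iff.mpr h) hns
    · exact absurd (singleton_inter_empty.mpr h) hne
  have h2' : 2 ≤ k := by omega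
  have hk : k ≤ N := by omega
  rw [pairset_mid h2' hk] at hne hns
  refine ⟨h2', hk, ?_⟩
  rw [pair_inter_empty] at hne
  rw [pair_subset] at hns
  by_cases ha : k ∈ S <;> by_cases hb : k-1 ∈ S
  · exact absurd ⟨hb, ha⟩ hns
  · exact Or.inl ⟨ha, hb⟩
  · exact Or.inr ⟨ha, hb⟩
  · exact absurd ⟨hb, ha⟩ hne

lemma e3_mem {k : ℕ} {S : Finset ℕ} (h2 : 2 ≤ k) (hk : k ∈ S) (hk1 : k - 1 ∉ S) :
    k - 1 ∈ insert (k-1) (S.erase k) ∧ k ∉ insert (k-1) (S.erase k) := by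
  refine ⟨Finset.mem_insert_self _ _, ?_⟩
  simp only [Finset.mem_insert, Finset.mem_erase]
  push_neg
  exact ⟨by omega, fun h => absurd rfl h⟩

lemma e3_inv {k : ℕ} {S : Finset ℕ} (hk : k ∈ S) (hk1 : k - 1 ∉ S) :
    insert k ((insert (k-1) (S.erase k)).erase (k-1)) = S := by
  rw [Finset.erase_insert (fun h => hk1 (Finset.mem_of_mem_erase h)),
    Finset.insert_erase hk]

lemma e3_inv' {k : ℕ} {S : Finset ℕ} (hk : k ∉ S) (hk1 : k - 1 ∈ S) :
    insert (k-1) ((insert k (S.erase (k-1))).erase k) = S := by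
  rw [Finset.erase_insert (fun h => hk (Finset.mem_of_mem_erase h)),
    Finset.insert_erase hk1]

lemma e3_nsubs {n m k : ℕ} {S : Finset ℕ} (hS : S ∈ nsubs n m)
    (h2 : 2 ≤ k) (hkm : k ≤ n+m) (hk : k ∈ S) (hk1 : k - 1 ∉ S) :
    insert (k-1) (S.erase k) ∈ nsubs n m := by
  obtain ⟨hsub, hcard⟩ := mem_nsubs.mp hS
  rw [mem_nsubs]
  constructor
  · intro x hx
    rcases Finset.mem_insert.mp hx with rfl | hx
    · simp only [Finset.mem_Icc]; omega
    · exact hsub (Finset.mem_of_mem_erase hx)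
  · rw [Finset.card_insert_of_notMem (fun h => hk1 (Finset.mem_of_mem_erase h)),
      Finset.card_erase_of_mem hk]
    have : 1 ≤ S.card := Finset.card_pos.mpr ⟨k, hk⟩
    omega

lemma e3_nsubs' {n m k : ℕ} {S : Finset ℕ} (hS : S ∈ nsubs n m)
    (h2 : 2 ≤ k) (hkm : k ≤ n+m) (hk : k ∉ S) (hk1 : k - 1 ∈ S) :
    insert k (S.erase (k-1)) ∈ nsubs n m := by
  obtain ⟨hsub, hcard⟩ := mem_nsubs.mp hS
  rw [mem_nsubs]
  constructor
  · intro x hx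
    rcases Finset.mem_insert.mp hx with rfl | hx
    · simp only [Finset.mem_Icc]; omega
    · exact hsub (Finset.mem_of_mem_erase hx)
  · rw [Finset.card_insert_of_notMem (fun h => hk (Finset.mem_of_mem_erase h)),
      Finset.card_erase_of_mem hk1]
    have : 1 ≤ S.card := Finset.card_pos.mpr ⟨k-1, hk1⟩
    omega

/-- The unique edge of `Λ(n,m)` of color `k` incident to the vertex `v`. -/
noncomputable def can (n m k : ℕ) (v : Lbl × Finset ℕ) :
    (Lbl × Finset ℕ) × (Lbl × Finset ℕ) × ℕ :=
  if pairset (n+m) k ∩ v.2 = ∅ then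
    (if v.1 = Lbl.A ∨ v.1 = Lbl.B then ((Lbl.A, v.2), (Lbl.B, v.2), k)
     else ((Lbl.C, v.2), (Lbl.D, v.2), k))
  else if pairset (n+m) k ⊆ v.2 then
    (if v.1 = Lbl.A ∨ v.1 = Lbl.C then ((Lbl.A, v.2), (Lbl.C, v.2), k)
     else ((Lbl.B, v.2), (Lbl.D, v.2), k))
  else if k ∈ v.2 then ((v.1, v.2), (v.1, insert (k-1) (v.2.erase k)), k)
  else ((v.1, insert k (v.2.erase (k-1))), (v.1, v.2), k)

lemma can_mem {n m k : ℕ} (hn : 1 ≤ n) (hm : 1 ≤ m) {X : Lbl} {S : Finset ℕ}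
    (hS : S ∈ nsubs n m) (hk1 : 1 ≤ k) (hk2 : k ≤ n+m+1) :
    can n m k (X, S) ∈ (LamNM n m).Es ∧ (can n m k (X, S)).2.2 = k ∧
      MG.incid (can n m k (X, S)) (X, S) := by
  have hkIcc : k ∈ Finset.Icc 1 (n+m+1) := Finset.mem_Icc.mpr ⟨hk1, hk2⟩
  unfold can
  split_ifs with h1 hX h2 hX' h3
  · -- E1, X ∈ {A,B}
    refine ⟨mem_Es.mpr ⟨mem_VsNM.mpr hS, mem_VsNM.mpr hS, hkIcc,
      Or.inl ⟨rfl, h1, Or.inl ⟨rfl, rfl⟩⟩⟩, rfl, ?_⟩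
    rcases hX with rfl | rfl
    · exact Or.inl rfl
    · exact Or.inr rfl
  · -- E1, X ∈ {C,D}
    refine ⟨mem_Es.mpr ⟨mem_VsNM.mpr hS, mem_VsNM.mpr hS, hkIcc,
      Or.inl ⟨rfl, h1, Or.inr ⟨rfl, rfl⟩⟩⟩, rfl, ?_⟩
    cases X
    · exact absurd (Or.inl rfl) hX
    · exact absurd (Or.inr rfl) hX
    · exact Or.inl rfl
    · exact Or.inr rfl
  · -- E2, X ∈ {A,C}
    refine ⟨mem_Es.mpr ⟨mem_VsNM.mpr hS, mem_VsNM.mpr hS, hkIcc,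
      Or.inr (Or.inl ⟨rfl, h2, Or.inl ⟨rfl, rfl⟩⟩)⟩, rfl, ?_⟩
    rcases hX' with rfl | rfl
    · exact Or.inl rfl
    · exact Or.inr rfl
  · -- E2, X ∈ {B,D}
    refine ⟨mem_Es.mpr ⟨mem_VsNM.mpr hS, mem_VsNM.mpr hS, hkIcc,
      Or.inr (Or.inl ⟨rfl, h2, Or.inr ⟨rfl, rfl⟩⟩)⟩, rfl, ?_⟩
    cases X
    · exact absurd (Or.inl rfl) hX'
    · exact Or.inl rfl
    · exact absurd (Or.inr rfl) hX'
    · exact Or.inr rfl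
  · -- E3, k ∈ S
    obtain ⟨h2k, hkm, hone⟩ := pairset_cases (by omega) hk1 hk2 S h1 h2
    have hk1S : k - 1 ∉ S := by
      rcases hone with ⟨_, h⟩ | ⟨h, _⟩
      · exact h
      · exact absurd h3 h
    refine ⟨mem_Es.mpr ⟨mem_VsNM.mpr hS, mem_VsNM.mpr (e3_nsubs hS h2k hkm h3 hk1S),
      hkIcc, Or.inr (Or.inr ⟨rfl, h2k, hkm, h3, hk1S, rfl⟩)⟩, rfl, Or.inl rfl⟩
  · -- E3, k ∉ S
    obtain ⟨h2k, hkm, hone⟩ := pairset_cases (by omega) hk1 hk2 S h1 h2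
    have hk1S : k - 1 ∈ S := by
      rcases hone with ⟨h, _⟩ | ⟨_, h⟩
      · exact absurd h h3
      · exact h
    have hkT : k ∈ insert k (S.erase (k-1)) := Finset.mem_insert_self _ _
    have hk1T : k - 1 ∉ insert k (S.erase (k-1)) := by
      simp only [Finset.mem_insert, Finset.mem_erase]
      push_neg
      exact ⟨by omega, fun h => absurd rfl h⟩
    refine ⟨mem_Es.mpr ⟨mem_VsNM.mpr (e3_nsubs' hS h2k hkm h3 hk1S),
      mem_VsNM.mpr hS, hkIcc,
      Or.inr (Or.inr ⟨rfl, h2k, hkm, hkT, hk1T, (e3_inv' h3 hk1S).symm⟩)⟩,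
      rfl, Or.inr rfl⟩

lemma can_eq {n m k : ℕ} (hn : 1 ≤ n) (hm : 1 ≤ m) {X : Lbl} {S : Finset ℕ}
    {e : (Lbl × Finset ℕ) × (Lbl × Finset ℕ) × ℕ}
    (he : e ∈ (LamNM n m).Es) (hc : e.2.2 = k) (hi : MG.incid e (X, S)) :
    e = can n m k (X, S) := by
  obtain ⟨⟨X₁, S₁⟩, ⟨X₂, S₂⟩, k'⟩ := e
  obtain rfl : k = k' := hc.symm
  rw [mem_Es] at he
  obtain ⟨hv1, hv2, hkIcc, hspec⟩ := he
  rcases hspec with ⟨hSS, hint, hlbl⟩ | ⟨hSS, hsub, hlbl⟩ |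
      ⟨hXX, h2k, hkm, hkS, hk1S, hS2⟩
  · -- E1
    simp only at hSS hint hlbl
    subst hSS
    rcases hi with h | h <;> rw [Prod.mk.injEq] at h <;> obtain ⟨rfl, rfl⟩ := h <;>
      unfold can <;> simp only <;> rw [if_pos hint]
    · rcases hlbl with ⟨h1, h2⟩ | ⟨h1, h2⟩ <;> subst h1 <;> subst h2
      · rw [if_pos (Or.inl rfl)]
      · rw [if_neg (by simp)]
    · rcases hlbl with ⟨h1, h2⟩ | ⟨h1, h2⟩ <;> subst h1 <;> subst h2
      · rw [if_pos (Or.inr rfl)]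
      · rw [if_neg (by simp)]
  · -- E2
    simp only at hSS hsub hlbl
    subst hSS
    have hne : ¬ pairset (n+m) k ∩ S₁ = ∅ := by
      rw [Finset.inter_eq_left.mpr hsub]
      exact (pairset_nonempty _ _).ne_empty
    rcases hi with h | h <;> rw [Prod.mk.injEq] at h <;> obtain ⟨rfl, rfl⟩ := h <;>
      unfold can <;> simp only <;> rw [if_neg hne, if_pos hsub]
    · rcases hlbl with ⟨h1, h2⟩ | ⟨h1, h2⟩ <;> subst h1 <;> subst h2
      · rw [if_pos (Or.inl rfl)]
      · rw [if_neg (by simp)]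
    · rcases hlbl with ⟨h1, h2⟩ | ⟨h1, h2⟩ <;> subst h1 <;> subst h2
      · rw [if_pos (Or.inr rfl)]
      · rw [if_neg (by simp)]
  · -- E3
    simp only at hXX h2k hkm hkS hk1S hS2
    subst hXX
    subst hS2
    rcases hi with h | h <;> rw [Prod.mk.injEq] at h <;> obtain ⟨rfl, rfl⟩ := h <;>
      unfold can <;> simp only
    · rw [if_neg (by
        rw [pairset_mid h2k hkm, pair_inter_empty]
        exact fun h => h.2 hkS)]
      rw [if_neg (by
        rw [pairset_mid h2k hkm, pair_subset]
        exact fun h => hk1S h.1)]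
      rw [if_pos hkS]
    · obtain ⟨hmem1, hmem2⟩ := e3_mem h2k hkS hk1S
      rw [if_neg (by
        rw [pairset_mid h2k hkm, pair_inter_empty]
        exact fun h => h.1 hmem1)]
      rw [if_neg (by
        rw [pairset_mid h2k hkm, pair_subset]
        exact fun h => hmem2 h.2)]
      rw [if_neg hmem2, e3_inv hkS hk1S]

lemma Icc1n_nsubs (n m : ℕ) : Finset.Icc 1 n ∈ nsubs n m := by
  rw [mem_nsubs]
  refine ⟨Finset.Icc_subset_Icc le_rfl (by omega), ?_⟩
  rw [Nat.card_Icc]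
  omega

lemma adj_symm {n m : ℕ} :
    Symmetric ((LamNM n m).Adj (Finset.Icc 1 (n+m+1))) := by
  rintro u v ⟨hu, hv, e, he, hk, hj⟩
  refine ⟨hv, hu, e, he, hk, ?_⟩
  unfold MG.joins at hj ⊢
  tauto

lemma adj_edge {n m : ℕ} {e : (Lbl × Finset ℕ) × (Lbl × Finset ℕ) × ℕ}
    (he : e ∈ (LamNM n m).Es) :
    (LamNM n m).Adj (Finset.Icc 1 (n+m+1)) e.1 e.2.1 := by
  have h := mem_Es.mp he
  exact ⟨h.1, h.2.1, e, he, h.2.2.1, Or.inl ⟨rfl, rfl⟩⟩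

lemma find_k {n m : ℕ} (hn : 1 ≤ n) {S : Finset ℕ} (hS : S ∈ nsubs n m)
    (hne : S ≠ Finset.Icc 1 n) :
    ∃ k, 2 ≤ k ∧ k ≤ n+m ∧ k ∈ S ∧ k - 1 ∉ S := by
  by_contra hcon
  push_neg at hcon
  obtain ⟨hsub, hcard⟩ := mem_nsubs.mp hS
  have key : ∀ k, k ∈ S → ∀ j, 1 ≤ j → j ≤ k → j ∈ S := by
    intro k
    induction k using Nat.strong_induction_on with
    | _ k ih =>
      intro hk j hj1 hjk
      rcases eq_or_lt_of_le hjk with rfl | hlt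
      · exact hk
      · have hbd := Finset.mem_Icc.mp (hsub hk)
        have h2 : 2 ≤ k := by omega
        have hk1 : k - 1 ∈ S := hcon k h2 hbd.2 hk
        exact ih (k-1) (by omega) hk1 j hj1 (by omega)
  have hSne : S.Nonempty := Finset.card_pos.mp (by omega)
  have h1 : Finset.Icc 1 (S.max' hSne) ⊆ S := by
    intro j hj
    rw [Finset.mem_Icc] at hj
    exact key _ (S.max'_mem hSne) j hj.1 hj.2
  have h2 : S ⊆ Finset.Icc 1 (S.max' hSne) := by
    intro x hx
    rw [Finset.mem_Icc]
    exact ⟨(Finset.mem_Icc.mp (hsub hx)).1, Finset.le_max' S x hx⟩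
  have hEq : S = Finset.Icc 1 (S.max' hSne) := subset_antisymm h2 h1
  have : (Finset.Icc 1 (S.max' hSne)).card = n := by rw [← hEq]; exact hcard
  rw [Nat.card_Icc] at this
  have : S.max' hSne = n := by omega
  exact hne (by rw [hEq, this])

lemma conn_to_base {n m : ℕ} (hn : 1 ≤ n) (hm : 1 ≤ m) :
    ∀ t (S : Finset ℕ), (∑ i ∈ S, i) = t → S ∈ nsubs n m → ∀ X : Lbl,
      (LamNM n m).Conn (Finset.Icc 1 (n+m+1)) (X, S) (X, Finset.Icc 1 n) := by
  intro t
  induction t using Nat.strong_induction_on with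
  | _ t ih =>
    intro S hsum hS X
    by_cases h : S = Finset.Icc 1 n
    · subst h; exact Relation.ReflTransGen.refl
    · obtain ⟨k, h2k, hkm, hk, hk1⟩ := find_k hn hS h
      set S' := insert (k-1) (S.erase k) with hS'
      have hS'n : S' ∈ nsubs n m := e3_nsubs hS h2k hkm hk hk1
      have hedge : ((X, S), (X, S'), k) ∈ (LamNM n m).Es :=
        mem_Es.mpr ⟨mem_VsNM.mpr hS, mem_VsNM.mpr hS'n,
          (by simp only [Finset.mem_Icc]; omega),
          Or.inr (Or.inr ⟨rfl, h2k, hkm, hk, hk1, rfl⟩)⟩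
      have hadj : (LamNM n m).Adj (Finset.Icc 1 (n+m+1)) (X, S) (X, S') :=
        adj_edge hedge
      have hsum1 : (∑ i ∈ S.erase k, i) + k = ∑ i ∈ S, i :=
        Finset.sum_erase_add S _ hk
      have hsum2 : (∑ i ∈ S', i) = (k-1) + ∑ i ∈ S.erase k, i := by
        rw [hS', Finset.sum_insert (fun hc => hk1 (Finset.mem_of_mem_erase hc))]
      have hlt : (∑ i ∈ S', i) < t := by omega
      exact Relation.ReflTransGen.head hadj (ih _ hlt S' rfl hS'n X)

lemma conn_base_labels {n m : ℕ} (hn : 1 ≤ n) (hm : 1 ≤ m) (X Y : Lbl) :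
    (LamNM n m).Conn (Finset.Icc 1 (n+m+1)) (X, Finset.Icc 1 n) (Y, Finset.Icc 1 n) := by
  set S₀ : Finset ℕ := Finset.Icc 1 n with hS₀
  have hS₀n : S₀ ∈ nsubs n m := Icc1n_nsubs n m
  have hnm : n + m ∉ S₀ := by
    rw [hS₀, Finset.mem_Icc]; omega
  have h1 : (1 : ℕ) ∈ S₀ := by rw [hS₀, Finset.mem_Icc]; omega
  have hint : pairset (n+m) (n+m+1) ∩ S₀ = ∅ := by
    rw [pairset_top (by omega), singleton_inter_empty]
    exact hnm
  have hsub : pairset (n+m) 1 ⊆ S₀ := by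
    rw [pairset_one, Finset.singleton_subset_iff]
    exact h1
  have eAB : ((Lbl.A, S₀), (Lbl.B, S₀), n+m+1) ∈ (LamNM n m).Es :=
    mem_Es.mpr ⟨mem_VsNM.mpr hS₀n, mem_VsNM.mpr hS₀n,
      (by simp only [Finset.mem_Icc]; omega), Or.inl ⟨rfl, hint, Or.inl ⟨rfl, rfl⟩⟩⟩
  have eCD : ((Lbl.C, S₀), (Lbl.D, S₀), n+m+1) ∈ (LamNM n m).Es :=
    mem_Es.mpr ⟨mem_VsNM.mpr hS₀n, mem_VsNM.mpr hS₀n,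
      (by simp only [Finset.mem_Icc]; omega), Or.inl ⟨rfl, hint, Or.inr ⟨rfl, rfl⟩⟩⟩
  have eAC : ((Lbl.A, S₀), (Lbl.C, S₀), 1) ∈ (LamNM n m).Es :=
    mem_Es.mpr ⟨mem_VsNM.mpr hS₀n, mem_VsNM.mpr hS₀n,
      (by simp only [Finset.mem_Icc]; omega),
      Or.inr (Or.inl ⟨rfl, hsub, Or.inl ⟨rfl, rfl⟩⟩)⟩
  have eBD : ((Lbl.B, S₀), (Lbl.D, S₀), 1) ∈ (LamNM n m).Es :=
    mem_Es.mpr ⟨mem_VsNM.mpr hS₀n, mem_VsNM.mpr hS₀n,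
      (by simp only [Finset.mem_Icc]; omega),
      Or.inr (Or.inl ⟨rfl, hsub, Or.inr ⟨rfl, rfl⟩⟩)⟩
  have cAB := Relation.ReflTransGen.single (adj_edge eAB)
  have cCD := Relation.ReflTransGen.single (adj_edge eCD)
  have cAC := Relation.ReflTransGen.single (adj_edge eAC)
  have cBD := Relation.ReflTransGen.single (adj_edge eBD)
  have hsymm : Symmetric ((LamNM n m).Conn (Finset.Icc 1 (n+m+1))) :=
    fun _ _ h => (@Relation.ReflTransGen.stdSymm _ _ ⟨adj_symm⟩).symm _ _ h
  cases X <;> cases Y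
  · exact Relation.ReflTransGen.refl
  · exact cAB
  · exact cAC
  · exact cAC.trans cCD
  · exact hsymm cAB
  · exact Relation.ReflTransGen.refl
  · exact (hsymm cAB).trans cAC
  · exact cBD
  · exact hsymm cAC
  · exact (hsymm cAC).trans cAB
  · exact Relation.ReflTransGen.refl
  · exact cCD
  · exact (hsymm cCD).trans (hsymm cAC)
  · exact hsymm cBD
  · exact hsymm cCD
  · exact Relation.ReflTransGen.refl

end Stmt19

/-- For `n, m ≥ 1` and `d = n+m+1`, the multigraph `Λ(n,m)` is an admissible `d`-colored
multigraph: it is loopless (and well-formed) and connected, and for each color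
`k ∈ {1,…,d}` the edges of color `k` form a perfect matching of the vertex set
(every vertex is incident to exactly one edge of color `k`). -/
theorem stmt19 (n m : ℕ) (hn : 1 ≤ n) (hm : 1 ≤ m) :
    MG.Admissible (Finset.Icc 1 (n+m+1)) (LamNM n m) := by
  refine ⟨?_, ?_, ?_⟩
  · -- well-formedness
    intro e he
    obtain ⟨h1, h2, h3, hspec⟩ := Stmt19.mem_Es.mp he
    refine ⟨h1, h2, ?_, h3⟩
    rcases hspec with ⟨_, _, hl⟩ | ⟨_, _, hl⟩ | ⟨_, h2k, _, hkS, hk1S, hS2⟩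
    · intro h
      have hXX := congrArg Prod.fst h
      rcases hl with ⟨ha, hb⟩ | ⟨ha, hb⟩ <;> rw [ha, hb] at hXX <;> exact Lbl.noConfusion hXX
    · intro h
      have hXX := congrArg Prod.fst h
      rcases hl with ⟨ha, hb⟩ | ⟨ha, hb⟩ <;> rw [ha, hb] at hXX <;> exact Lbl.noConfusion hXX
    · intro h
      have hSS := congrArg Prod.snd h
      rw [hS2] at hSS
      exact (Stmt19.e3_mem h2k hkS hk1S).2 (hSS ▸ hkS)
  · -- connectivity
    intro u hu v hv
    obtain ⟨X, S⟩ := u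
    obtain ⟨Y, T⟩ := v
    have hS := Stmt19.mem_VsNM.mp hu
    have hT := Stmt19.mem_VsNM.mp hv
    have hsymm : Symmetric ((LamNM n m).Conn (Finset.Icc 1 (n+m+1))) :=
      fun _ _ h => (@Relation.ReflTransGen.stdSymm _ _ ⟨Stmt19.adj_symm⟩).symm _ _ h
    have c1 := Stmt19.conn_to_base hn hm _ S rfl hS X
    have c2 := Stmt19.conn_to_base hn hm _ T rfl hT Y
    exact c1.trans ((Stmt19.conn_base_labels hn hm X Y).trans (hsymm c2))
  · -- perfect matchings
    intro i hi v hv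
    rw [Finset.mem_Icc] at hi
    obtain ⟨X, S⟩ := v
    have hS := Stmt19.mem_VsNM.mp hv
    obtain ⟨hmem, hcol, hinc⟩ := Stmt19.can_mem (k := i) hn hm hS hi.1 hi.2
    refine ⟨Stmt19.can n m i (X, S), ⟨hmem, hcol, hinc⟩, ?_⟩
    rintro e ⟨he, hc, hi'⟩
    exact Stmt19.can_eq hn hm he hc hi'
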